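/- Let ξ_m = e^{2πi/m}, let X_1,...,X_n be i.i.d. standard Gaussians, let S_1,...,S_K ⊆ {1,...,n}, and suppose that all except at most a δ fraction of the pairs j ≠ k satisfy |S_j Δ S_k| ≥ (m/σ)² t. Let Σ_k = φ_k + σ·Σ_{i∈S_k} X_i with arbitrary angles φ_k ∈ [0,2π). Then E[|ξ_m^{Σ_1} + ... + ξ_m^{Σ_K}|²] ≤ K + 2δ·C(K,2) + 2(1−δ)·C(K,2)·e^{-2π²t}. -/

import Mathlib

open MeasureTheory ProbabilityTheory Real
open scoped NNReal

open scoped ENNReal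

lemma gauss_char (a : ℝ) :
    ∫ x : ℝ, Complex.exp (a * x * Complex.I) ∂(gaussianReal 0 1) = Real.exp (-a^2/2) := by
  have h2pi : (0:ℝ) < 2 * π := by positivity
  rw [gaussianReal_of_var_ne_zero 0 one_ne_zero]
  have h1 : gaussianPDF 0 1 = fun x => ((Real.toNNReal (gaussianPDFReal 0 1 x) : ℝ≥0) : ℝ≥0∞) := by
    ext x; rw [gaussianPDF, ENNReal.ofReal]
  rw [h1, integral_withDensity_eq_integral_smul
    ((measurable_gaussianPDFReal 0 1).real_toNNReal)]
  have h2 : ∀ x : ℝ, (Real.toNNReal (gaussianPDFReal 0 1 x)) • Complex.exp (a * x * Complex.I)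
      = (((Real.sqrt (2 * π))⁻¹ : ℝ) : ℂ) *
        Complex.exp ((-(1/2) : ℂ) * x ^ 2 + (a * Complex.I) * x + 0) := by
    intro x
    rw [NNReal.smul_def, Real.coe_toNNReal _ (gaussianPDFReal_nonneg 0 1 x)]
    rw [gaussianPDFReal]
    simp only [mul_one, sub_zero, NNReal.coe_one]
    rw [Complex.real_smul, Complex.ofReal_mul, Complex.ofReal_exp, mul_assoc, ← Complex.exp_add]
    congr 1
    push_cast
    ring
  simp_rw [h2]
  rw [integral_const_mul, integral_cexp_quadratic (by norm_num : (-(1/2):ℂ).re < 0) (a*Complex.I) 0]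
  have hsq : ((π : ℂ) / -(-(1/2))) ^ (1/2 : ℂ) = ((Real.sqrt (2*π) : ℝ) : ℂ) := by
    rw [show ((π:ℂ) / -(-(1/2))) = ((2*π : ℝ) : ℂ) by push_cast; ring,
      show (1/2 : ℂ) = ((1/2:ℝ):ℂ) by norm_num, ← Complex.ofReal_cpow h2pi.le,
      Real.sqrt_eq_rpow]
  rw [hsq]
  have hs : ((Real.sqrt (2*π) : ℝ) : ℂ) ≠ 0 := by
    rw [Complex.ofReal_ne_zero]
    positivity
  have hone : (((Real.sqrt (2*π))⁻¹ : ℝ) : ℂ) * ((Real.sqrt (2*π) : ℝ) : ℂ) = 1 := by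
    push_cast
    exact inv_mul_cancel₀ hs
  rw [← mul_assoc, hone, one_mul, Complex.ofReal_exp]
  congr 1
  rw [mul_pow, Complex.I_sq]
  push_cast
  ring

lemma integrable_of_abs_le_one {Ω : Type*} {mΩ : MeasurableSpace Ω} {μ : Measure Ω}
    [IsProbabilityMeasure μ] {f : Ω → ℂ} (hm : AEStronglyMeasurable f μ)
    (hb : ∀ ω, ‖f ω‖ ≤ 1) : Integrable f μ := by
  refine Integrable.mono' (integrable_const 1) hm (ae_of_all _ fun ω => ?_)
  simpa using hb ω

lemma indepFun_integral_mul_complex {Ω : Type*} {mΩ : MeasurableSpace Ω} {μ : Measure Ω}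
    {Z W : Ω → ℂ} (h : IndepFun Z W μ) (hZ : Integrable Z μ) (hW : Integrable W μ) :
    ∫ ω, Z ω * W ω ∂μ = (∫ ω, Z ω ∂μ) * ∫ ω, W ω ∂μ := by
  have hZr : Integrable (fun ω => (Z ω).re) μ := by simpa using hZ.re
  have hZi : Integrable (fun ω => (Z ω).im) μ := by simpa using hZ.im
  have hWr : Integrable (fun ω => (W ω).re) μ := by simpa using hW.re
  have hWi : Integrable (fun ω => (W ω).im) μ := by simpa using hW.im
  have hrr : IndepFun (fun ω => (Z ω).re) (fun ω => (W ω).re) μ :=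
    h.comp Complex.measurable_re Complex.measurable_re
  have hri : IndepFun (fun ω => (Z ω).re) (fun ω => (W ω).im) μ :=
    h.comp Complex.measurable_re Complex.measurable_im
  have hir : IndepFun (fun ω => (Z ω).im) (fun ω => (W ω).re) μ :=
    h.comp Complex.measurable_im Complex.measurable_re
  have hii : IndepFun (fun ω => (Z ω).im) (fun ω => (W ω).im) μ :=
    h.comp Complex.measurable_im Complex.measurable_im
  have hZW : Integrable (fun ω => Z ω * W ω) μ := h.integrable_mul hZ hW
  apply Complex.ext
  · rw [Complex.mul_re]
    simp only [← RCLike.re_to_complex, ← RCLike.im_to_complex]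
    rw [← integral_re hZW, ← integral_re hZ, ← integral_re hW, ← integral_im hZ, ← integral_im hW]
    simp only [RCLike.re_to_complex, RCLike.im_to_complex, Complex.mul_re]
    rw [integral_sub (show Integrable (fun x => (Z x).re * (W x).re) μ from hrr.integrable_mul hZr hWr)
      (show Integrable (fun x => (Z x).im * (W x).im) μ from hii.integrable_mul hZi hWi),
      hrr.integral_fun_mul_eq_mul_integral hZr.1 hWr.1, hii.integral_fun_mul_eq_mul_integral hZi.1 hWi.1]
  · rw [Complex.mul_im]
    simp only [← RCLike.re_to_complex, ← RCLike.im_to_complex]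
    rw [← integral_im hZW, ← integral_re hZ, ← integral_re hW, ← integral_im hZ, ← integral_im hW]
    simp only [RCLike.re_to_complex, RCLike.im_to_complex, Complex.mul_im]
    rw [integral_add (show Integrable (fun x => (Z x).re * (W x).im) μ from hri.integrable_mul hZr hWi)
      (show Integrable (fun x => (Z x).im * (W x).re) μ from hir.integrable_mul hZi hWr),
      hri.integral_fun_mul_eq_mul_integral hZr.1 hWi.1, hir.integral_fun_mul_eq_mul_integral hZi.1 hWr.1]


lemma integral_prod_of_indep {Ω : Type*} {mΩ : MeasurableSpace Ω} {μ : Measure Ω}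
    [IsProbabilityMeasure μ] {ι : Type*} [DecidableEq ι] {g : ι → Ω → ℂ}
    (hindep : iIndepFun g μ)
    (hmeas : ∀ i, Measurable (g i)) (hbdd : ∀ i ω, ‖g i ω‖ ≤ 1)
    (s : Finset ι) :
    Integrable (fun ω => ∏ i ∈ s, g i ω) μ ∧
      ∫ ω, ∏ i ∈ s, g i ω ∂μ = ∏ i ∈ s, ∫ ω, g i ω ∂μ := by
  induction s using Finset.induction_on with
  | empty => simp
  | @insert a s ha ih =>
    have hind : IndepFun (g a) (fun ω => ∏ i ∈ s, g i ω) μ := by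
      have := (hindep.indepFun_finset_prod_of_notMem hmeas ha).symm
      have heq : (fun ω => ∏ i ∈ s, g i ω) = ∏ i ∈ s, g i := by
        ext ω; simp [Finset.prod_apply]
      rwa [heq]
    have hInt_a : Integrable (g a) μ := integrable_of_abs_le_one (hmeas a).aestronglyMeasurable (hbdd a)
    constructor
    · simp_rw [Finset.prod_insert ha]
      exact (show Integrable (g a * fun ω => ∏ i ∈ s, g i ω) μ from hind.integrable_mul hInt_a ih.1)
    · simp_rw [Finset.prod_insert ha]
      rw [indepFun_integral_mul_complex hind hInt_a ih.1, ih.2]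

lemma pair_integral {Ω : Type*} {mΩ : MeasurableSpace Ω} {μ : Measure Ω}
    [IsProbabilityMeasure μ] {n : ℕ} {X : Fin n → Ω → ℝ}
    (hX_indep : iIndepFun X μ)
    (hX_meas : ∀ i, Measurable (X i))
    (hX_dist : ∀ i, μ.map (X i) = gaussianReal 0 1)
    (a c : ℝ) (A B : Finset (Fin n)) :
    ∫ ω, Complex.exp ((c : ℂ) * Complex.I +
        (a : ℂ) * (((∑ i ∈ A, X i ω) - ∑ i ∈ B, X i ω : ℝ) : ℂ) * Complex.I) ∂μ
      = Complex.exp ((c : ℂ) * Complex.I)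
        * Real.exp (-a^2 * ((symmDiff A B).card : ℝ) / 2) := by
  classical
  set d : Fin n → ℝ := fun i => (if i ∈ A then (1:ℝ) else 0) - (if i ∈ B then 1 else 0) with hd
  set g : Fin n → Ω → ℂ :=
    fun i ω => Complex.exp (((a * d i : ℝ) : ℂ) * (X i ω : ℂ) * Complex.I) with hg
  have hsum : ∀ ω, ∑ i, a * d i * X i ω = a * ((∑ i ∈ A, X i ω) - ∑ i ∈ B, X i ω) := by
    intro ω
    have h1 : ∀ i ∈ Finset.univ, a * d i * X i ω
        = (if i ∈ A then a * X i ω else 0) - (if i ∈ B then a * X i ω else 0) := by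
      intro i _
      by_cases hA : i ∈ A <;> by_cases hB : i ∈ B <;> simp [hd, hA, hB] <;> ring
    rw [Finset.sum_congr rfl h1, Finset.sum_sub_distrib, Finset.sum_ite_mem, Finset.sum_ite_mem,
      Finset.univ_inter, Finset.univ_inter, ← Finset.mul_sum, ← Finset.mul_sum, ← mul_sub]
  have key : ∀ ω, Complex.exp ((c : ℂ) * Complex.I +
      (a : ℂ) * (((∑ i ∈ A, X i ω) - ∑ i ∈ B, X i ω : ℝ) : ℂ) * Complex.I)
      = Complex.exp ((c:ℂ) * Complex.I) * ∏ i, g i ω := by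
    intro ω
    rw [Complex.exp_add]
    congr 1
    rw [hg]
    simp only
    rw [← Complex.exp_sum]
    congr 1
    have : ∀ i ∈ Finset.univ, ((a * d i : ℝ) : ℂ) * (X i ω : ℂ) * Complex.I
        = ((a * d i * X i ω : ℝ) : ℂ) * Complex.I := by intro i _; push_cast; ring
    rw [Finset.sum_congr rfl this, ← Finset.sum_mul, ← Complex.ofReal_sum, hsum ω]
    push_cast; ring
  simp_rw [key]
  rw [integral_const_mul]
  congr 1
  -- independence of g
  have hgmeas : ∀ i, Measurable (g i) := by
    intro i
    exact Complex.measurable_exp.comp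
      (((Complex.measurable_ofReal.comp (hX_meas i)).const_mul _).mul_const _)
  have hgbdd : ∀ i ω, ‖g i ω‖ ≤ 1 := by
    intro i ω
    rw [hg]
    simp only
    rw [Complex.norm_exp]
    simp
  have hgind : iIndepFun g μ := by
    have := hX_indep.comp (g := fun i (x : ℝ) => Complex.exp (((a * d i : ℝ) : ℂ) * (x : ℂ) * Complex.I))
      (fun i => Complex.measurable_exp.comp ((Complex.measurable_ofReal.const_mul _).mul_const _))
    exact this
  rw [(integral_prod_of_indep hgind hgmeas hgbdd Finset.univ).2]
  have hgint : ∀ i, ∫ ω, g i ω ∂μ = ((Real.exp (-(a * d i)^2/2) : ℝ) : ℂ) := by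
    intro i
    have hF : Measurable (fun x : ℝ => Complex.exp (((a * d i : ℝ) : ℂ) * (x : ℂ) * Complex.I)) :=
      Complex.measurable_exp.comp ((Complex.measurable_ofReal.const_mul _).mul_const _)
    have h2 := integral_map (μ := μ) (hX_meas i).aemeasurable
      (f := fun x : ℝ => Complex.exp (((a * d i : ℝ) : ℂ) * (x : ℂ) * Complex.I))
      hF.aestronglyMeasurable
    rw [hX_dist i, gauss_char] at h2
    exact h2.symm
  simp_rw [hgint]
  rw [← Complex.ofReal_prod]
  congr 1
  rw [← Real.exp_sum]
  congr 1
  have hterm : ∀ i ∈ Finset.univ, -(a * d i)^2/2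
      = (if i ∈ symmDiff A B then -a^2/2 else 0) := by
    intro i _
    by_cases hA : i ∈ A <;> by_cases hB : i ∈ B <;>
      simp [hd, hA, hB, Finset.mem_symmDiff] <;> ring
  rw [Finset.sum_congr rfl hterm, Finset.sum_ite_mem, Finset.univ_inter, Finset.sum_const,
    nsmul_eq_mul]
  ring

theorem expectation_sq_norm_sum_noisy_phases
    {Ω : Type*} [MeasurableSpace Ω] (μ : Measure Ω) [IsProbabilityMeasure μ]
    (n K : ℕ) (X : Fin n → Ω → ℝ)
    (hX_indep : iIndepFun X μ)
    (hX_meas : ∀ i, Measurable (X i))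
    (hX_dist : ∀ i, μ.map (X i) = gaussianReal 0 1)
    (m σ t δ : ℝ) (hm : 0 < m) (hσ : 0 < σ) (ht : 0 < t)
    (hδ0 : 0 ≤ δ) (hδ1 : δ ≤ 1)
    (S : Fin K → Finset (Fin n)) (φ : Fin K → ℝ)
    (hφ : ∀ k, φ k ∈ Set.Ico 0 (2 * π))
    (hpairs :
      ((Finset.univ.filter (fun p : Fin K × Fin K =>
          p.1 < p.2 ∧ ¬ ((m / σ) ^ 2 * t ≤ ((symmDiff (S p.1) (S p.2)).card : ℝ)))).card : ℝ)
        ≤ δ * (K.choose 2)) :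
    ∫ ω, (‖∑ k : Fin K,
          Complex.exp (2 * π * Complex.I *
            (φ k + σ * ∑ i ∈ S k, X i ω) / m)‖) ^ 2 ∂μ
      ≤ K + 2 * δ * (K.choose 2) + 2 * (1 - δ) * (K.choose 2) * Real.exp (-2 * π ^ 2 * t) := by
  classical
  have hm' : (m : ℂ) ≠ 0 := by exact_mod_cast hm.ne'
  set a : ℝ := 2 * π * σ / m with ha
  set c : Fin K × Fin K → ℝ := fun p => 2 * π * (φ p.1 - φ p.2) / m with hc
  set h : Fin K × Fin K → Ω → ℂ := fun p ω => Complex.exp ((c p : ℂ) * Complex.I +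
      (a : ℂ) * (((∑ i ∈ S p.1, X i ω) - ∑ i ∈ S p.2, X i ω : ℝ) : ℂ) * Complex.I) with hh
  -- pointwise identity
  have hpt : ∀ ω, (‖∑ k : Fin K,
      Complex.exp (2 * π * Complex.I * (φ k + σ * ∑ i ∈ S k, X i ω) / m)‖) ^ 2
      = ∑ p : Fin K × Fin K, (h p ω).re := by
    intro ω
    set z := ∑ k : Fin K, Complex.exp (2 * π * Complex.I * (φ k + σ * ∑ i ∈ S k, X i ω) / m)
      with hz
    have h1 : (‖z‖) ^ 2 = (z * (starRingEnd ℂ) z).re := by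
      rw [Complex.mul_conj, Complex.ofReal_re, Complex.sq_norm]
    rw [h1, hz, map_sum, Finset.sum_mul_sum,
      show (∑ p : Fin K × Fin K, (h p ω).re)
        = ∑ j : Fin K, ∑ k : Fin K, (h (j, k) ω).re from Fintype.sum_prod_type _]
    rw [Complex.re_sum]
    refine Finset.sum_congr rfl fun j _ => ?_
    rw [Complex.re_sum]
    refine Finset.sum_congr rfl fun k _ => ?_
    rw [hh]
    simp only
    rw [← Complex.exp_conj, ← Complex.exp_add]
    congr 1
    simp only [map_div₀, map_mul, map_add, map_sum, Complex.conj_I, Complex.conj_ofReal,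
      map_ofNat, hc, ha]
    push_cast
    field_simp
    ring
  simp_rw [hpt]
  -- measurability and integrability
  have hmeas : ∀ p : Fin K × Fin K, Measurable (h p) := by
    intro p
    rw [hh]
    apply Complex.measurable_exp.comp
    apply Measurable.add
    · exact measurable_const
    · apply Measurable.mul_const
      apply Measurable.const_mul
      apply Complex.measurable_ofReal.comp
      exact (Finset.measurable_sum _ fun i _ => hX_meas i).sub
        (Finset.measurable_sum _ fun i _ => hX_meas i)
  have habs : ∀ p ω, ‖h p ω‖ ≤ 1 := by
    intro p ω
    rw [hh]
    simp only
    rw [Complex.norm_exp]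
    simp
  have hint : ∀ p : Fin K × Fin K, Integrable (h p) μ := fun p =>
    integrable_of_abs_le_one (hmeas p).aestronglyMeasurable (habs p)
  have hintre : ∀ p : Fin K × Fin K, Integrable (fun ω => (h p ω).re) μ := by
    intro p; simpa using (hint p).re
  rw [integral_finset_sum _ fun p _ => hintre p]
  have hre : ∀ p : Fin K × Fin K, ∫ ω, (h p ω).re ∂μ = (∫ ω, h p ω ∂μ).re := by
    intro p
    have := integral_re (𝕜 := ℂ) (hint p)
    simpa using this
  have hval : ∀ p : Fin K × Fin K, ∫ ω, h p ω ∂μ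
      = Complex.exp ((c p : ℂ) * Complex.I)
        * Real.exp (-a^2 * ((symmDiff (S p.1) (S p.2)).card : ℝ) / 2) := by
    intro p
    rw [hh]
    exact pair_integral hX_indep hX_meas hX_dist a (c p) (S p.1) (S p.2)
  simp_rw [hre, hval]
  set good : Fin K × Fin K → Prop := fun p => (m / σ) ^ 2 * t ≤ ((symmDiff (S p.1) (S p.2)).card : ℝ) with hgood
  set R : Fin K × Fin K → ℝ := fun p =>
    (Complex.exp ((c p : ℂ) * Complex.I)
      * ((Real.exp (-a ^ 2 * ((symmDiff (S p.1) (S p.2)).card : ℝ) / 2) : ℝ) : ℂ)).re with hR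
  show ∑ p : Fin K × Fin K, R p ≤ _
  set E := Real.exp (-2 * π ^ 2 * t) with hE
  have hE0 : 0 ≤ E := (Real.exp_pos _).le
  have hE1 : E ≤ 1 := by
    rw [hE, Real.exp_le_one_iff]
    nlinarith [pi_pos, sq_nonneg π, ht.le]
  have hRabs : ∀ p, R p ≤ Real.exp (-a ^ 2 * ((symmDiff (S p.1) (S p.2)).card : ℝ) / 2) := by
    intro p
    refine le_trans (Complex.re_le_norm _) ?_
    rw [norm_mul, Complex.norm_exp, Complex.norm_real, Real.norm_eq_abs, abs_of_pos (Real.exp_pos _)]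
    simp
  have hR1 : ∀ p, R p ≤ 1 := by
    intro p
    refine le_trans (hRabs p) ?_
    rw [Real.exp_le_one_iff]
    have h1 : (0:ℝ) ≤ ((symmDiff (S p.1) (S p.2)).card : ℝ) := Nat.cast_nonneg _
    have h2 := mul_nonneg (sq_nonneg a) h1
    linarith
  have hRdiag : ∀ j : Fin K, R (j, j) = 1 := by
    intro j
    rw [hR]
    simp [hc, symmDiff_self]
  have hRgood : ∀ p, good p → R p ≤ E := by
    intro p hg
    refine le_trans (hRabs p) ?_
    rw [hE, Real.exp_le_exp]
    rw [hgood] at hg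
    set v : ℝ := ((symmDiff (S p.1) (S p.2)).card : ℝ)
    have hq : (σ / m) ^ 2 * ((m / σ) ^ 2 * t) = t := by field_simp
    have h2 : (σ / m) ^ 2 * ((m / σ) ^ 2 * t) ≤ (σ / m) ^ 2 * v :=
      mul_le_mul_of_nonneg_left hg (by positivity)
    rw [hq] at h2
    have ha2 : a ^ 2 = 4 * π ^ 2 * (σ / m) ^ 2 := by rw [ha]; ring
    rw [ha2]
    nlinarith [sq_nonneg π, h2]
  -- split diag/offdiag
  have hsplit := Finset.sum_filter_add_sum_filter_not (Finset.univ : Finset (Fin K × Fin K))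
    (fun p => p.1 = p.2) R
  rw [← hsplit]
  have hdiag : ∑ p ∈ Finset.univ.filter (fun p : Fin K × Fin K => p.1 = p.2), R p = K := by
    have hall : ∀ p ∈ Finset.univ.filter (fun p : Fin K × Fin K => p.1 = p.2), R p = 1 := by
      rintro ⟨x, y⟩ hp
      simp only [Finset.mem_filter] at hp
      obtain ⟨-, rfl⟩ := hp
      exact hRdiag x
    rw [Finset.sum_congr rfl hall, Finset.sum_const, nsmul_eq_mul, mul_one]
    congr 1
    rw [Finset.card_filter, Fintype.sum_prod_type]
    simp
  rw [hdiag]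
  have hoff : ∑ p ∈ Finset.univ.filter (fun p : Fin K × Fin K => ¬ p.1 = p.2), R p
      ≤ 2 * δ * (K.choose 2) + 2 * (1 - δ) * (K.choose 2) * E := by
    set B : Fin K × Fin K → ℝ := fun p => if good p then E else 1 with hB
    have hRB : ∀ p, R p ≤ B p := by
      intro p
      by_cases hg : good p
      · rw [hB]; simp only [if_pos hg]; exact hRgood p hg
      · rw [hB]; simp only [if_neg hg]; exact hR1 p
    refine le_trans (Finset.sum_le_sum fun p _ => hRB p) ?_
    have e1 : (Finset.univ.filter (fun p : Fin K × Fin K => ¬ p.1 = p.2)).filter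
        (fun p => p.1 < p.2) = Finset.univ.filter (fun p : Fin K × Fin K => p.1 < p.2) := by
      ext p
      simp only [Finset.mem_filter, Finset.mem_univ, true_and]
      exact ⟨fun hp => hp.2, fun hp => ⟨ne_of_lt hp, hp⟩⟩
    have e2 : (Finset.univ.filter (fun p : Fin K × Fin K => ¬ p.1 = p.2)).filter
        (fun p => ¬ p.1 < p.2) = Finset.univ.filter (fun p : Fin K × Fin K => p.2 < p.1) := by
      ext p
      simp only [Finset.mem_filter, Finset.mem_univ, true_and, not_lt]
      constructor
      · rintro ⟨hne, hle⟩
        exact lt_of_le_of_ne hle (fun hh => hne hh.symm)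
      · intro hp
        exact ⟨fun hh => absurd hh.symm (ne_of_lt hp), hp.le⟩
    rw [← Finset.sum_filter_add_sum_filter_not
      (Finset.univ.filter (fun p : Fin K × Fin K => ¬ p.1 = p.2)) (fun p => p.1 < p.2) B,
      e1, e2]
    have hswap : ∑ p ∈ Finset.univ.filter (fun p : Fin K × Fin K => p.2 < p.1), B p
        = ∑ p ∈ Finset.univ.filter (fun p : Fin K × Fin K => p.1 < p.2), B p := by
      refine Finset.sum_nbij' (fun p => (p.2, p.1)) (fun p => (p.2, p.1)) ?_ ?_ ?_ ?_ ?_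
      · intro p hp
        simp only [Finset.mem_filter, Finset.mem_univ, true_and] at hp ⊢
        exact hp
      · intro p hp
        simp only [Finset.mem_filter, Finset.mem_univ, true_and] at hp ⊢
        exact hp
      · intro p _; rfl
      · intro p _; rfl
      · intro p _
        rw [hB]
        simp only [hgood]
        rw [symmDiff_comm]
    rw [hswap]
    -- now 2 * sum over lt pairs
    set L := Finset.univ.filter (fun p : Fin K × Fin K => p.1 < p.2) with hL
    have hLC : ((L.card : ℕ) : ℝ) ≤ (K.choose 2 : ℝ) := by
      have key : L.card ≤ K.choose 2 := by
        have himg := Sym2.card_image_offDiag (Finset.univ : Finset (Fin K))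
        rw [Finset.card_univ, Fintype.card_fin] at himg
        rw [← himg]
        apply Finset.card_le_card_of_injOn (Function.uncurry Sym2.mk)
        · intro p hp
          rw [hL] at hp
          simp only [Finset.mem_coe, Finset.mem_filter, Finset.mem_univ, true_and] at hp
          exact Finset.mem_image.mpr ⟨p, Finset.mem_offDiag.mpr
            ⟨Finset.mem_univ _, Finset.mem_univ _, ne_of_lt hp⟩, rfl⟩
        · intro p hp q hq hpq
          rw [hL] at hp hq
          simp only [Finset.coe_filter, Finset.mem_univ, true_and, Set.mem_setOf_eq] at hp hq
          rcases Sym2.mk_eq_mk_iff.mp hpq with hh | hh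
          · exact hh
          · exfalso
            rw [hh] at hp
            exact absurd (lt_trans hp hq) (lt_irrefl _)
      exact_mod_cast key
    have hcards := Finset.card_filter_add_card_filter_not (s := L) (p := good)
    have hbad : ((L.filter (fun p => ¬ good p)).card : ℝ) ≤ δ * (K.choose 2) := by
      refine le_trans ?_ hpairs
      rw [hL, Finset.filter_filter]
    have hsumlt : ∑ p ∈ L, B p
        = ((L.filter good).card : ℝ) * E + ((L.filter (fun p => ¬ good p)).card : ℝ) := by
      rw [← Finset.sum_filter_add_sum_filter_not L good B]
      congr 1
      · rw [Finset.sum_congr rfl (fun p hp => ?_), Finset.sum_const, nsmul_eq_mul]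
        rw [hB]
        simp only [if_pos (Finset.mem_filter.mp hp).2]
      · rw [Finset.sum_congr rfl (fun p hp => ?_), Finset.sum_const, nsmul_eq_mul, mul_one]
        rw [hB]
        simp only [if_neg (Finset.mem_filter.mp hp).2]
    rw [hsumlt]
    have hgb : ((L.filter good).card : ℝ) + ((L.filter (fun p => ¬ good p)).card : ℝ)
        ≤ (K.choose 2 : ℝ) := by
      rw [← Nat.cast_add]
      rw_mod_cast [hcards]
      exact hLC
    have hCnn : (0:ℝ) ≤ (K.choose 2 : ℝ) := by positivity
    nlinarith [hbad, hgb, hE0, hE1, hCnn,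
      mul_le_mul_of_nonneg_right hbad (sub_nonneg.mpr hE1)]
  linarith [hoff]
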